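/- arXiv:math/0606527 — 2 statements merged into one kernel-verified Lean document; each statement's English description precedes it below -/
import Mathlib

section
/- Let $\{\hat\xi(z):z\in\mathbb{Z}^d\}$ be i.i.d. standard exponential random variables, let $\ell_n=\kappa_d(n)n^d$ be the number of lattice points in the $\ell^1$-ball of radius $n$, and let $\hat M_n^{(k)}$ denote the $(k+1)$st largest value among $\{\hat\xi(z):|z|\le n\}$. Then for every $\rho\in(0,d)$, almost surely, $\lim_{n\to\infty}\hat M_n^{(\lfloor n^\rho\rfloor)}/\log n = d-\rho$. -/
open MeasureTheory ProbabilityTheory Filter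
open scoped Classical

/-- The ℓ¹-ball of radius `n` in `ℤᵈ`, as a finite set. -/
noncomputable def latticeBall (d n : ℕ) : Finset (Fin d → ℤ) :=
  (Finset.Icc (fun _ => -(n : ℤ)) (fun _ => (n : ℤ))).filter
    (fun z => ∑ j, (z j).natAbs ≤ n)

open scoped ENNReal


lemma pow_div_exp_le_factorial : ∀ j : ℕ, ((j : ℝ) / Real.exp 1) ^ j ≤ j.factorial := by
  intro j
  induction j with
  | zero => simp
  | succ j ih =>
    rcases Nat.eq_zero_or_pos j with rfl | hj
    · have : (1:ℝ) ≤ Real.exp 1 := Real.one_le_exp (by norm_num)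
      rw [Nat.cast_one, pow_one, Nat.factorial_one, Nat.cast_one, div_le_one (by positivity)]
      exact this
    · have hjR : (0:ℝ) < j := by exact_mod_cast hj
      have hkey : (((j:ℝ) + 1) / j) ^ j ≤ Real.exp 1 := by
        have h1 : ((j:ℝ) + 1) / j = 1 + 1 / j := by field_simp
        have h2 : (1 : ℝ) + 1 / j ≤ Real.exp (1 / j) := by
          have := Real.add_one_le_exp (1 / (j:ℝ)); linarith
        calc (((j:ℝ) + 1) / j) ^ j = (1 + 1/(j:ℝ)) ^ j := by rw [h1]
          _ ≤ Real.exp (1/j) ^ j := by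
              apply pow_le_pow_left₀ (by positivity) h2
          _ = Real.exp ((j:ℕ) * (1/(j:ℝ))) := by rw [← Real.exp_nat_mul]
          _ = Real.exp 1 := by rw [mul_one_div, div_self (ne_of_gt hjR)]
      have hsplit : (((j:ℝ) + 1) / Real.exp 1) ^ (j+1)
          = (((j:ℝ) + 1) / Real.exp 1) * ((((j:ℝ)+1)/j) ^ j * ((j:ℝ)/Real.exp 1) ^ j) := by
        rw [← mul_pow]
        have : ((j:ℝ)+1)/j * ((j:ℝ)/Real.exp 1) = ((j:ℝ)+1)/Real.exp 1 := by
          field_simp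
        rw [this, pow_succ, mul_comm]
      have hepos : (0:ℝ) < Real.exp 1 := Real.exp_pos 1
      have hcast : ((j+1 : ℕ) : ℝ) = (j:ℝ) + 1 := by push_cast; ring
      rw [hcast]
      calc (((j:ℝ) + 1) / Real.exp 1) ^ (j+1) = (((j:ℝ) + 1) / Real.exp 1) * ((((j:ℝ)+1)/j) ^ j * ((j:ℝ)/Real.exp 1) ^ j) := hsplit
        _ ≤ (((j:ℝ) + 1) / Real.exp 1) * (Real.exp 1 * (j.factorial : ℝ)) := by
            apply mul_le_mul_of_nonneg_left _ (by positivity)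
            exact mul_le_mul hkey ih (by positivity) (by positivity)
        _ = ((j:ℝ) + 1) * (j.factorial : ℝ) := by field_simp
        _ = ((j+1).factorial : ℝ) := by rw [Nat.factorial_succ]; push_cast; ring

lemma choose_mul_pow_le (m j : ℕ) (hj : 1 ≤ j) (q : ℝ) (hq : 0 ≤ q) :
    (m.choose j : ℝ) * q ^ j ≤ (Real.exp 1 * m * q / j) ^ j := by
  have hjR : (0:ℝ) < j := by exact_mod_cast hj
  have h1 : (m.choose j : ℝ) ≤ (m:ℝ) ^ j / j.factorial := by
    exact_mod_cast Nat.choose_le_pow_div j m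
  have h2 : ((j : ℝ) / Real.exp 1) ^ j ≤ j.factorial := pow_div_exp_le_factorial j
  have hfac : (0:ℝ) < j.factorial := by exact_mod_cast j.factorial_pos
  have hbpos : (0:ℝ) < ((j:ℝ) / Real.exp 1) ^ j := by positivity
  have hinv : (1:ℝ) / j.factorial ≤ (Real.exp 1 / j) ^ j := by
    have he : (Real.exp 1 / (j:ℝ)) ^ j = (((j:ℝ) / Real.exp 1) ^ j)⁻¹ := by
      rw [← inv_pow, inv_div]
    rw [he, one_div, inv_le_inv₀ hfac hbpos]
    exact h2
  have h3 : (m:ℝ) ^ j / j.factorial ≤ (m:ℝ) ^ j * (Real.exp 1 / j) ^ j := by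
    rw [div_eq_mul_one_div]
    exact mul_le_mul_of_nonneg_left hinv (by positivity)
  have hbase : (m:ℝ) * (Real.exp 1 / j) * q = Real.exp 1 * m * q / j := by
    rw [eq_div_iff hjR.ne', div_eq_mul_inv]
    have : (j:ℝ)⁻¹ * (j:ℝ) = 1 := inv_mul_cancel₀ hjR.ne'
    calc (m:ℝ) * (Real.exp 1 * (j:ℝ)⁻¹) * q * j = Real.exp 1 * m * q * ((j:ℝ)⁻¹ * j) := by ring
      _ = Real.exp 1 * m * q := by rw [this, mul_one]
  calc (m.choose j : ℝ) * q ^ j ≤ ((m:ℝ) ^ j * (Real.exp 1 / j) ^ j) * q ^ j := by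
        apply mul_le_mul_of_nonneg_right (h1.trans h3) (by positivity)
    _ = ((m:ℝ) * (Real.exp 1 / j) * q) ^ j := by rw [← mul_pow, ← mul_pow]
    _ = (Real.exp 1 * m * q / j) ^ j := by rw [hbase]


section helpers

variable {Ω : Type*} [MeasureSpace Ω] [IsProbabilityMeasure (ℙ : Measure Ω)]

lemma union_bound_powersetCard {ι : Type*} (A : ι → Set Ω) (S : Finset ι) (j : ℕ) (p : ℝ≥0∞)
    (h : ∀ T ∈ S.powersetCard j, ℙ (⋂ z ∈ T, A z) ≤ p) :
    ℙ (⋃ T ∈ S.powersetCard j, ⋂ z ∈ T, A z) ≤ (S.card.choose j) * p := by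
  calc ℙ (⋃ T ∈ S.powersetCard j, ⋂ z ∈ T, A z)
      ≤ ∑ T ∈ S.powersetCard j, ℙ (⋂ z ∈ T, A z) := measure_biUnion_finset_le _ _
    _ ≤ ∑ _T ∈ S.powersetCard j, p := Finset.sum_le_sum (fun T hT => h T hT)
    _ = (S.card.choose j) * p := by
        rw [Finset.sum_const, Finset.card_powersetCard, nsmul_eq_mul]

lemma meas_biInter_preimage {ι : Type*} (ξ : ι → Ω → ℝ)
    (hindep : iIndepFun ξ ℙ)
    (T : Finset ι) (B : Set ℝ) (hB : MeasurableSet B) (p : ℝ≥0∞)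
    (hp : ∀ z ∈ T, ℙ (ξ z ⁻¹' B) = p) :
    ℙ (⋂ z ∈ T, ξ z ⁻¹' B) = p ^ T.card := by
  rw [hindep.meas_biInter (fun z _ => ⟨B, hB, rfl⟩)]
  rw [Finset.prod_congr rfl hp, Finset.prod_const]

lemma tsum_meas_ne_top (s : ℕ → Set Ω)
    (h : ∀ᶠ n in atTop, ℙ (s n) ≤ ENNReal.ofReal ((n : ℝ) ^ (-2 : ℝ))) :
    (∑' n, ℙ (s n)) ≠ ∞ := by
  obtain ⟨N, hN⟩ := eventually_atTop.mp h
  have hle : ∀ n, ℙ (s n) ≤ (if n < N then 1 else 0) + ENNReal.ofReal ((n : ℝ) ^ (-2 : ℝ)) := by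
    intro n
    by_cases hn : n < N
    · simp only [hn, if_true]
      exact le_add_right prob_le_one
    · simp only [hn, if_false, zero_add]
      exact hN n (not_lt.mp hn)
  refine ne_top_of_le_ne_top ?_ (ENNReal.tsum_le_tsum hle)
  rw [ENNReal.tsum_add]
  apply ENNReal.add_ne_top.mpr
  constructor
  · have : (∑' n : ℕ, (if n < N then (1:ℝ≥0∞) else 0)) = ∑ n ∈ Finset.range N, (if n < N then (1:ℝ≥0∞) else 0) := by
      apply tsum_eq_sum
      intro n hn
      rw [Finset.mem_range, not_lt] at hn
      simp [Nat.not_lt.mpr hn]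
    rw [this]
    exact (ne_of_lt (lt_of_le_of_lt (Finset.sum_le_card_nsmul _ _ 1 (fun n _ => by split <;> simp))
      (by rw [nsmul_eq_mul, mul_one]; exact ENNReal.natCast_lt_top _ : ((Finset.range N).card • (1:ℝ≥0∞)) < ∞)))
  · have hs : Summable (fun n : ℕ => (n : ℝ) ^ (-2 : ℝ)) := by
      rw [Real.summable_nat_rpow]
      norm_num
    have hnn : ∀ n : ℕ, 0 ≤ (n : ℝ) ^ (-2 : ℝ) := fun n => Real.rpow_nonneg (Nat.cast_nonneg n) _
    rw [← ENNReal.ofReal_tsum_of_nonneg hnn hs]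
    exact ENNReal.ofReal_ne_top

lemma eventually_log_le_rpow (A B c : ℝ) (hc : 0 < c) :
    ∀ᶠ n : ℕ in atTop, A * Real.log n + B ≤ (n : ℝ) ^ c := by
  have hreal : ∀ᶠ x : ℝ in atTop, A * Real.log x + B ≤ x ^ c := by
    have h1 : (fun x : ℝ => A * Real.log x) =o[atTop] (fun x : ℝ => x ^ c) :=
      (isLittleO_log_rpow_atTop hc).const_mul_left A
    have h2 : ∀ᶠ x : ℝ in atTop, ‖A * Real.log x‖ ≤ (1/2) * ‖x ^ c‖ :=
      h1.def (by norm_num)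
    have h3 : Tendsto (fun x : ℝ => x ^ c) atTop atTop := tendsto_rpow_atTop hc
    filter_upwards [h2, h3.eventually_ge_atTop (2 * B), eventually_ge_atTop (1:ℝ)]
      with x hx1 hx2 hx3
    have hxc : 0 ≤ x ^ c := Real.rpow_nonneg (by linarith) c
    have : A * Real.log x ≤ (1/2) * x ^ c := by
      calc A * Real.log x ≤ ‖A * Real.log x‖ := le_abs_self _
        _ ≤ (1/2) * ‖x ^ c‖ := hx1
        _ = (1/2) * x ^ c := by rw [Real.norm_eq_abs, abs_of_nonneg hxc]
    linarith
  exact tendsto_natCast_atTop_atTop.eventually hreal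

end helpers

lemma latticeBall_card_le (d n : ℕ) : (latticeBall d n).card ≤ (2*n+1)^d := by
  have h := Finset.card_filter_le (Finset.Icc (fun _ : Fin d => -(n : ℤ)) (fun _ => (n : ℤ)))
    (fun z => ∑ j, (z j).natAbs ≤ n)
  refine h.trans_eq ?_
  rw [Pi.card_Icc]
  have h2 : ∀ j : Fin d,
      (Finset.Icc ((fun _ : Fin d => -(n:ℤ)) j) ((fun _ : Fin d => (n:ℤ)) j)).card = 2*n+1 := by
    intro j
    show (Finset.Icc (-(n:ℤ)) n).card = 2*n+1
    clear h
    rw [Int.card_Icc]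
    omega
  rw [Finset.prod_congr rfl (fun j _ => h2 j), Finset.prod_const, Finset.card_univ,
    Fintype.card_fin]

lemma latticeBall_card_ge (d n : ℕ) : (n/d + 1)^d ≤ (latticeBall d n).card := by
  have hsub : Finset.Icc (fun _ : Fin d => (0:ℤ)) (fun _ => ((n/d : ℕ) : ℤ)) ⊆ latticeBall d n := by
    intro z hz
    rw [Finset.mem_Icc] at hz
    obtain ⟨h0, h1⟩ := hz
    rw [Pi.le_def] at h0 h1
    have h0' : ∀ j, (0:ℤ) ≤ z j := fun j => h0 j
    have h1' : ∀ j, z j ≤ ((n/d : ℕ) : ℤ) := fun j => h1 j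
    rw [latticeBall, Finset.mem_filter, Finset.mem_Icc, Pi.le_def, Pi.le_def]
    have hdn : ((n/d : ℕ) : ℤ) ≤ (n : ℤ) := by exact_mod_cast Nat.div_le_self n d
    refine ⟨⟨fun j => ?_, fun j => ?_⟩, ?_⟩
    · show -(n:ℤ) ≤ z j
      have := h0' j; omega
    · show z j ≤ (n:ℤ)
      have := h1' j; omega
    · have hle : ∀ j, (z j).natAbs ≤ n/d := by
        intro j
        have ha := h0' j
        have hb := h1' j
        omega
      calc ∑ j, (z j).natAbs ≤ ∑ _j : Fin d, n/d := Finset.sum_le_sum (fun j _ => hle j)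
        _ = d * (n/d) := by rw [Finset.sum_const, Finset.card_univ, Fintype.card_fin, smul_eq_mul]
        _ ≤ n := Nat.mul_div_le n d
  calc (n/d + 1)^d = (Finset.Icc (fun _ : Fin d => (0:ℤ)) (fun _ => ((n/d : ℕ) : ℤ))).card := by
        rw [Pi.card_Icc]
        have h2 : ∀ j : Fin d,
            (Finset.Icc ((fun _ : Fin d => (0:ℤ)) j) ((fun _ : Fin d => ((n/d:ℕ):ℤ)) j)).card
              = n/d + 1 := by
          intro j
          show (Finset.Icc (0:ℤ) ((n/d:ℕ):ℤ)).card = n/d + 1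
          clear hsub
          rw [Int.card_Icc, sub_zero]
          rw [show ((n/d : ℕ) : ℤ) + 1 = ((n/d + 1 : ℕ) : ℤ) by push_cast; ring]
          exact Int.toNat_natCast _
        rw [Finset.prod_congr rfl (fun j _ => h2 j), Finset.prod_const, Finset.card_univ,
          Fintype.card_fin]
    _ ≤ (latticeBall d n).card := Finset.card_le_card hsub

set_option maxHeartbeats 2000000 in
lemma core_lemma {Ω : Type*} [MeasureSpace Ω] [IsProbabilityMeasure (ℙ : Measure Ω)]
    (d : ℕ) (hd : 1 ≤ d) (ρ : ℝ) (hρ0 : 0 < ρ) (hρd : ρ < d)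
    (ξ : (Fin d → ℤ) → Ω → ℝ) (hmeas : ∀ z, Measurable (ξ z))
    (hindep : iIndepFun ξ ℙ)
    (hdist : ∀ z, ∀ x : ℝ, 0 ≤ x → ℙ {ω | x < ξ z ω} = ENNReal.ofReal (Real.exp (-x)))
    (Mk : ℕ → Ω → ℝ)
    (hMk : ∀ᵐ ω ∂ℙ, ∀ᶠ n : ℕ in atTop,
      (∃ z ∈ latticeBall d n, ξ z ω = Mk n ω) ∧
      ((latticeBall d n).filter (fun z => Mk n ω ≤ ξ z ω)).card = ⌊(n : ℝ) ^ ρ⌋₊ + 1)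
    (ε : ℝ) (hε : 0 < ε) (hεd : ε < (d:ℝ) - ρ) :
    ∀ᵐ ω ∂ℙ, ∀ᶠ n : ℕ in atTop, |Mk n ω / Real.log n - ((d:ℝ) - ρ)| ≤ ε := by
  set k : ℕ → ℕ := fun n => ⌊(n : ℝ) ^ ρ⌋₊ with hk
  set m : ℕ → ℕ := fun n => (latticeBall d n).card with hm
  set x : ℕ → ℝ := fun n => ((d:ℝ) - ρ + ε) * Real.log n with hx
  set y : ℕ → ℝ := fun n => ((d:ℝ) - ρ - ε) * Real.log n with hy
  have hx0 : ∀ n : ℕ, 0 ≤ x n := fun n =>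
    mul_nonneg (by linarith) (Real.log_natCast_nonneg n)
  have hy0 : ∀ n : ℕ, 0 ≤ y n := fun n =>
    mul_nonneg (by linarith) (Real.log_natCast_nonneg n)
  set E : ℕ → Set Ω := fun n =>
    ⋃ T ∈ (latticeBall d n).powersetCard (k n + 1), ⋂ z ∈ T, ξ z ⁻¹' (Set.Ioi (x n)) with hE
  set F : ℕ → Set Ω := fun n =>
    ⋃ T ∈ (latticeBall d n).powersetCard (m n - k n), ⋂ z ∈ T, ξ z ⁻¹' (Set.Iic (y n)) with hF
  -- probability bounds
  have hPE : ∀ n, ℙ (E n) ≤ ((m n).choose (k n + 1)) *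
      (ENNReal.ofReal (Real.exp (-x n))) ^ (k n + 1) := by
    intro n
    apply union_bound_powersetCard
    intro T hT
    rw [Finset.mem_powersetCard] at hT
    rw [meas_biInter_preimage ξ hindep T _ measurableSet_Ioi (ENNReal.ofReal (Real.exp (-x n)))
      (fun z _ => hdist z (x n) (hx0 n)), hT.2]
  have hPF : ∀ n, ℙ (F n) ≤ ((m n).choose (m n - k n)) *
      (ENNReal.ofReal (1 - Real.exp (-y n))) ^ (m n - k n) := by
    intro n
    apply union_bound_powersetCard
    intro T hT
    rw [Finset.mem_powersetCard] at hT
    have hval : ∀ z ∈ T, ℙ (ξ z ⁻¹' (Set.Iic (y n))) = ENNReal.ofReal (1 - Real.exp (-y n)) := by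
      intro z _
      have hset : ξ z ⁻¹' (Set.Iic (y n)) = (ξ z ⁻¹' (Set.Ioi (y n)))ᶜ := by
        ext ω; simp [Set.mem_preimage, Set.mem_Iic, not_lt]
      have hval' : ℙ (ξ z ⁻¹' (Set.Ioi (y n))) = ENNReal.ofReal (Real.exp (-(y n))) :=
        hdist z (y n) (hy0 n)
      rw [hset, prob_compl_eq_one_sub ((hmeas z) measurableSet_Ioi), hval',
        ← ENNReal.ofReal_one, ← ENNReal.ofReal_sub _ (Real.exp_nonneg _)]
    rw [meas_biInter_preimage ξ hindep T _ measurableSet_Iic _ hval, hT.2]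
  -- eventual conditions
  have ev2 : ∀ᶠ n : ℕ in atTop, Real.exp 1 * 3^d ≤ (n:ℝ) ^ (ε/2) := by
    filter_upwards [eventually_log_le_rpow 0 (Real.exp 1 * 3^d) (ε/2) (by linarith)] with n h
    simpa using h
  have ev3 : ∀ᶠ n : ℕ in atTop, 4/ε ≤ (n:ℝ) ^ ρ :=
    ((tendsto_rpow_atTop hρ0).comp tendsto_natCast_atTop_atTop).eventually_ge_atTop _
  have hEsum : ∀ᶠ n : ℕ in atTop, ℙ (E n) ≤ ENNReal.ofReal ((n:ℝ) ^ (-2:ℝ)) := by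
    filter_upwards [eventually_ge_atTop 1, ev2, ev3] with n hn1 hn2 hn3
    have hn0 : (0:ℝ) < n := by exact_mod_cast hn1
    have hn1R : (1:ℝ) ≤ n := by exact_mod_cast hn1
    set j := k n + 1 with hjdef
    set q := Real.exp (-x n) with hqdef
    have hq0 : 0 ≤ q := Real.exp_nonneg _
    have hqr : q = (n:ℝ) ^ (-((d:ℝ) - ρ + ε)) := by
      rw [hqdef, Real.rpow_def_of_pos hn0, Real.exp_eq_exp]
      show -(((d:ℝ) - ρ + ε) * Real.log n) = Real.log n * -((d:ℝ) - ρ + ε)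
      ring
    have hm3 : (m n : ℝ) ≤ 3^d * (n:ℝ)^(d:ℕ) := by
      have h1 : m n ≤ (2*n+1)^d := latticeBall_card_le d n
      have h2 : (2*n+1)^d ≤ (3*n)^d := Nat.pow_le_pow_left (by omega) d
      calc (m n : ℝ) ≤ (((3*n)^d : ℕ) : ℝ) := by exact_mod_cast h1.trans h2
        _ = 3^d * (n:ℝ)^(d:ℕ) := by push_cast; rw [mul_pow]
    have hjn : (n:ℝ)^ρ ≤ (j:ℝ) := by
      have h := Nat.lt_floor_add_one ((n:ℝ)^ρ)
      have : ((j:ℕ):ℝ) = (⌊(n:ℝ)^ρ⌋₊ : ℝ) + 1 := by rw [hjdef]; push_cast; ring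
      rw [this]
      exact h.le
    have hjpos : (0:ℝ) < (j:ℝ) := lt_of_lt_of_le (Real.rpow_pos_of_pos hn0 ρ) hjn
    have hnd : ((n:ℝ))^(d:ℕ) = (n:ℝ)^((d:ℝ)) := (Real.rpow_natCast _ d).symm
    have hprod : (n:ℝ)^((d:ℝ)) * q = (n:ℝ)^(ρ - ε) := by
      rw [hqr, ← Real.rpow_add hn0]
      congr 1
      ring
    have hstep2 : Real.exp 1 * (m n) * q / (j:ℝ) ≤ (n:ℝ) ^ (-(ε/2)) := by
      have hnum : Real.exp 1 * (m n) * q ≤ (Real.exp 1 * 3^d) * (n:ℝ)^(ρ - ε) := by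
        have : Real.exp 1 * (m n) * q ≤ Real.exp 1 * (3^d * (n:ℝ)^(d:ℕ)) * q := by
          apply mul_le_mul_of_nonneg_right _ hq0
          exact mul_le_mul_of_nonneg_left hm3 (Real.exp_nonneg 1)
        calc Real.exp 1 * (m n) * q ≤ Real.exp 1 * (3^d * (n:ℝ)^(d:ℕ)) * q := this
          _ = (Real.exp 1 * 3^d) * ((n:ℝ)^((d:ℝ)) * q) := by rw [hnd]; ring
          _ = (Real.exp 1 * 3^d) * (n:ℝ)^(ρ - ε) := by rw [hprod]
      have hd1 : Real.exp 1 * (m n) * q / (j:ℝ) ≤ (Real.exp 1 * 3^d) * (n:ℝ)^(ρ - ε) / (n:ℝ)^ρ := by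
        apply div_le_div₀ (by positivity) hnum (Real.rpow_pos_of_pos hn0 ρ) hjn
      refine hd1.trans ?_
      have hrw : (Real.exp 1 * 3^d) * (n:ℝ)^(ρ - ε) / (n:ℝ)^ρ = (Real.exp 1 * 3^d) * (n:ℝ)^(-ε) := by
        rw [mul_div_assoc, ← Real.rpow_sub hn0]
        congr 2
        ring
      rw [hrw]
      calc (Real.exp 1 * 3^d) * (n:ℝ)^(-ε) ≤ (n:ℝ)^(ε/2) * (n:ℝ)^(-ε) :=
            mul_le_mul_of_nonneg_right hn2 (Real.rpow_nonneg hn0.le _)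
        _ = (n:ℝ)^(-(ε/2)) := by rw [← Real.rpow_add hn0]; congr 1; ring
    have hstep3 : ((n:ℝ)^(-(ε/2)))^(j:ℕ) ≤ (n:ℝ)^(-2:ℝ) := by
      rw [← Real.rpow_natCast ((n:ℝ)^(-(ε/2))) j, ← Real.rpow_mul hn0.le]
      apply Real.rpow_le_rpow_of_exponent_le hn1R
      have h2j : 2 ≤ (ε/2) * (j:ℝ) := by
        have : 4/ε ≤ (j:ℝ) := hn3.trans hjn
        rw [div_le_iff₀ hε] at this
        nlinarith
      nlinarith
    have hreal : ((m n).choose j : ℝ) * q^(j:ℕ) ≤ (n:ℝ)^(-2:ℝ) := by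
      calc ((m n).choose j : ℝ) * q^(j:ℕ) ≤ (Real.exp 1 * (m n) * q / (j:ℝ))^(j:ℕ) :=
            choose_mul_pow_le (m n) j (by omega) q hq0
        _ ≤ ((n:ℝ)^(-(ε/2)))^(j:ℕ) := pow_le_pow_left₀ (by positivity) hstep2 j
        _ ≤ (n:ℝ)^(-2:ℝ) := hstep3
    calc ℙ (E n) ≤ ((m n).choose j) * (ENNReal.ofReal q) ^ (j:ℕ) := hPE n
      _ = ENNReal.ofReal (((m n).choose j : ℝ) * q^(j:ℕ)) := by
          rw [ENNReal.ofReal_mul (Nat.cast_nonneg _), ENNReal.ofReal_pow hq0,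
            ENNReal.ofReal_natCast]
      _ ≤ ENNReal.ofReal ((n:ℝ)^(-2:ℝ)) := ENNReal.ofReal_le_ofReal hreal
  have ev4 : ∀ᶠ n : ℕ in atTop,
      ((d:ℝ)^d * ((d:ℝ)+2)) * Real.log n + ((d:ℝ)^d * ((d:ℝ) * Real.log 3 + 1)) ≤ (n:ℝ)^ε :=
    eventually_log_le_rpow _ _ ε hε
  have ev5 : ∀ᶠ n : ℕ in atTop, ((d:ℝ))^d ≤ (n:ℝ)^((d:ℝ)-ρ) :=
    ((tendsto_rpow_atTop (by linarith)).comp tendsto_natCast_atTop_atTop).eventually_ge_atTop _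
  have hdpos : (0:ℝ) < (d:ℝ)^d := by
    have : (0:ℝ) < (d:ℝ) := by exact_mod_cast hd
    positivity
  have hFsum : ∀ᶠ n : ℕ in atTop, ℙ (F n) ≤ ENNReal.ofReal ((n:ℝ) ^ (-2:ℝ)) := by
    filter_upwards [eventually_ge_atTop 1, ev4, ev5] with n hn1 hn4 hn5
    have hn0 : (0:ℝ) < n := by exact_mod_cast hn1
    have hn1R : (1:ℝ) ≤ n := by exact_mod_cast hn1
    set q := Real.exp (-y n) with hqdef
    have hq0 : (0:ℝ) < q := Real.exp_pos _
    have hq1 : q ≤ 1 := Real.exp_le_one_iff.mpr (neg_nonpos.mpr (hy0 n))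
    have hqr : q = (n:ℝ) ^ (-((d:ℝ) - ρ - ε)) := by
      rw [hqdef, Real.rpow_def_of_pos hn0, Real.exp_eq_exp]
      show -(((d:ℝ) - ρ - ε) * Real.log n) = Real.log n * -((d:ℝ) - ρ - ε)
      ring
    -- lower bound on m
    have hmlowN : (n/d + 1)^d ≤ m n := latticeBall_card_ge d n
    have hdiv : (n:ℝ) / (d:ℝ) ≤ ((n/d : ℕ) : ℝ) + 1 := by
      have hmod := Nat.div_add_mod n d
      have hlt : n % d < d := Nat.mod_lt n (by omega)
      have : (n:ℝ) < (d:ℝ) * (((n/d : ℕ) : ℝ) + 1) := by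
        have : n < d * (n/d) + d := by omega
        have h2 : (n:ℝ) < (d:ℝ) * ((n/d : ℕ) : ℝ) + d := by exact_mod_cast this
        linarith
      rw [div_le_iff₀ (by exact_mod_cast Nat.lt_of_lt_of_le Nat.zero_lt_one hd)]
      nlinarith
    have hmlow : ((n:ℝ)^((d:ℝ))) / (d:ℝ)^d ≤ (m n : ℝ) := by
      have h1 : ((n:ℝ) / (d:ℝ))^(d:ℕ) ≤ (((n/d : ℕ) : ℝ) + 1)^(d:ℕ) :=
        pow_le_pow_left₀ (by positivity) hdiv d
      have h2 : ((((n/d : ℕ) + 1)^d : ℕ) : ℝ) ≤ (m n : ℝ) := by exact_mod_cast hmlowN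
      have h3 : (((n/d : ℕ) : ℝ) + 1)^(d:ℕ) = ((((n/d : ℕ) + 1)^d : ℕ) : ℝ) := by push_cast; ring
      have h4 : ((n:ℝ) / (d:ℝ))^(d:ℕ) = ((n:ℝ)^((d:ℝ))) / (d:ℝ)^d := by
        rw [div_pow, Real.rpow_natCast]
      rw [← h4]
      exact h1.trans (h3 ▸ h2)
    have hm1 : 1 ≤ m n := le_trans (Nat.one_le_iff_ne_zero.mpr (by positivity)) hmlowN
    have hmpos : (0:ℝ) < (m n : ℝ) := by exact_mod_cast hm1
    have hm3 : (m n : ℝ) ≤ 3^d * (n:ℝ)^(d:ℕ) := by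
      have h1 : m n ≤ (2*n+1)^d := latticeBall_card_le d n
      have h2 : (2*n+1)^d ≤ (3*n)^d := Nat.pow_le_pow_left (by omega) d
      calc (m n : ℝ) ≤ (((3*n)^d : ℕ) : ℝ) := by exact_mod_cast h1.trans h2
        _ = 3^d * (n:ℝ)^(d:ℕ) := by push_cast; rw [mul_pow]
    -- k ≤ m
    have hrpow_nonneg : (0:ℝ) ≤ (n:ℝ)^ρ := Real.rpow_nonneg hn0.le ρ
    have hkρ : (k n : ℝ) ≤ (n:ℝ)^ρ := Nat.floor_le hrpow_nonneg
    have hρd' : (n:ℝ)^ρ ≤ ((n:ℝ)^((d:ℝ))) / (d:ℝ)^d := by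
      rw [le_div_iff₀ hdpos]
      calc (n:ℝ)^ρ * (d:ℝ)^d ≤ (n:ℝ)^ρ * (n:ℝ)^((d:ℝ)-ρ) :=
            mul_le_mul_of_nonneg_left hn5 hrpow_nonneg
        _ = (n:ℝ)^((d:ℝ)) := by rw [← Real.rpow_add hn0]; congr 1; ring
    have hkm : k n ≤ m n := by
      have : (k n : ℝ) ≤ (m n : ℝ) := hkρ.trans (hρd'.trans hmlow)
      exact_mod_cast this
    -- real estimate
    have hchoose : ((m n).choose (m n - k n) : ℝ) ≤ (m n : ℝ)^(k n) := by
      rw [Nat.choose_symm hkm]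
      calc ((m n).choose (k n) : ℝ) ≤ ((m n)^(k n) : ℝ) / (k n).factorial :=
            Nat.choose_le_pow_div (k n) (m n)
        _ ≤ (m n : ℝ)^(k n) := by
            apply div_le_self (by positivity)
            exact_mod_cast (k n).factorial_pos
    have hpow : (1 - q)^(m n - k n) ≤ Real.exp (((m n - k n : ℕ) : ℝ) * (-q)) := by
      have h1 : (0:ℝ) ≤ 1 - q := by linarith
      have h2 : 1 - q ≤ Real.exp (-q) := by
        have := Real.add_one_le_exp (-q); linarith
      calc (1 - q)^(m n - k n) ≤ (Real.exp (-q))^(m n - k n) := pow_le_pow_left₀ h1 h2 _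
        _ = Real.exp (((m n - k n : ℕ) : ℝ) * (-q)) := (Real.exp_nat_mul _ _).symm
    have hmexp : (m n : ℝ)^(k n) = Real.exp ((k n : ℝ) * Real.log (m n)) := by
      rw [← Real.exp_log hmpos, ← Real.exp_nat_mul, Real.exp_log hmpos]
    have hnum : (k n : ℝ) * Real.log (m n) + ((m n - k n : ℕ) : ℝ) * (-q)
        ≤ (-2) * Real.log n := by
      set L := Real.log n with hL
      have hL0 : 0 ≤ L := Real.log_natCast_nonneg n
      have hlog3 : (0:ℝ) ≤ Real.log 3 := Real.log_nonneg (by norm_num)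
      have hMlog0 : 0 ≤ Real.log (m n) := Real.log_nonneg (by exact_mod_cast hm1)
      have hMlog : Real.log (m n) ≤ (d:ℝ) * (Real.log 3 + L) := by
        calc Real.log (m n) ≤ Real.log (3^d * (n:ℝ)^(d:ℕ)) := by
              apply Real.log_le_log hmpos hm3
          _ = (d:ℝ) * (Real.log 3 + L) := by
              rw [Real.log_mul (by positivity) (by positivity), Real.log_pow, Real.log_pow]
              ring
      have hcast : ((m n - k n : ℕ) : ℝ) = (m n : ℝ) - (k n : ℝ) := Nat.cast_sub hkm
      have hqm : (n:ℝ)^(ρ+ε) / (d:ℝ)^d ≤ q * (m n : ℝ) := by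
        have h1 : (n:ℝ)^(-((d:ℝ)-ρ-ε)) * (((n:ℝ)^((d:ℝ))) / (d:ℝ)^d) ≤ q * (m n : ℝ) := by
          rw [hqr]
          exact mul_le_mul_of_nonneg_left hmlow (Real.rpow_nonneg hn0.le _)
        calc (n:ℝ)^(ρ+ε) / (d:ℝ)^d = (n:ℝ)^(-((d:ℝ)-ρ-ε)) * (((n:ℝ)^((d:ℝ))) / (d:ℝ)^d) := by
              rw [← mul_div_assoc, ← Real.rpow_add hn0]
              congr 2
              ring
          _ ≤ q * (m n : ℝ) := h1
      have hqk : q * (k n : ℝ) ≤ (n:ℝ)^ρ := by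
        calc q * (k n : ℝ) ≤ 1 * (k n : ℝ) :=
              mul_le_mul_of_nonneg_right hq1 (Nat.cast_nonneg _)
          _ = (k n : ℝ) := one_mul _
          _ ≤ (n:ℝ)^ρ := hkρ
      have hone : (1:ℝ) ≤ (n:ℝ)^ρ := Real.one_le_rpow hn1R hρ0.le
      have hsplit : (n:ℝ)^(ρ+ε) = (n:ℝ)^ρ * (n:ℝ)^ε := by
        rw [← Real.rpow_add hn0]
      have hklog : (k n : ℝ) * Real.log (m n) ≤ (n:ℝ)^ρ * ((d:ℝ) * (Real.log 3 + L)) :=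
        mul_le_mul hkρ hMlog hMlog0 hrpow_nonneg
      have h4' : ((d:ℝ)+2) * L + ((d:ℝ) * Real.log 3 + 1) ≤ (n:ℝ)^ε / (d:ℝ)^d := by
        rw [le_div_iff₀ hdpos]
        nlinarith [hn4]
      have hmain : (n:ℝ)^ρ * (((d:ℝ)+2) * L + ((d:ℝ) * Real.log 3 + 1))
          ≤ (n:ℝ)^ρ * ((n:ℝ)^ε / (d:ℝ)^d) :=
        mul_le_mul_of_nonneg_left h4' hrpow_nonneg
      have hq_nonneg : 0 ≤ q := hq0.le
      rw [hcast]
      have hqm' : (n:ℝ)^ρ * ((n:ℝ)^ε/(d:ℝ)^d) ≤ q * (m n : ℝ) := by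
        calc (n:ℝ)^ρ * ((n:ℝ)^ε/(d:ℝ)^d) = (n:ℝ)^(ρ+ε) / (d:ℝ)^d := by
              rw [hsplit]; ring
          _ ≤ q * (m n : ℝ) := hqm
      have hPL : Real.log ↑n ≤ (n:ℝ)^ρ * L := by
        have := mul_le_mul_of_nonneg_right hone hL0
        rw [one_mul] at this
        exact this
      nlinarith [hklog, hmain, hqm', hqk, hPL, hMlog0, hL0]
    have hreal : ((m n).choose (m n - k n) : ℝ) * (1-q)^(m n - k n) ≤ (n:ℝ)^(-2:ℝ) := by
      calc ((m n).choose (m n - k n) : ℝ) * (1-q)^(m n - k n)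
          ≤ (m n : ℝ)^(k n) * Real.exp (((m n - k n : ℕ) : ℝ) * (-q)) := by
            apply mul_le_mul hchoose hpow (pow_nonneg (by linarith : (0:ℝ) ≤ 1 - q) _) (by positivity)
        _ = Real.exp ((k n : ℝ) * Real.log (m n) + ((m n - k n : ℕ) : ℝ) * (-q)) := by
            rw [hmexp, ← Real.exp_add]
        _ ≤ Real.exp ((-2) * Real.log n) := Real.exp_le_exp.mpr hnum
        _ = (n:ℝ)^(-2:ℝ) := by rw [Real.rpow_def_of_pos hn0, mul_comm]
    have hq1' : (0:ℝ) ≤ 1 - q := by linarith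
    calc ℙ (F n) ≤ ((m n).choose (m n - k n)) *
          (ENNReal.ofReal (1 - Real.exp (-y n))) ^ (m n - k n) := hPF n
      _ = ENNReal.ofReal (((m n).choose (m n - k n) : ℝ) * (1-q)^(m n - k n)) := by
          rw [ENNReal.ofReal_mul (Nat.cast_nonneg _), ENNReal.ofReal_pow hq1',
            ENNReal.ofReal_natCast, hqdef]
      _ ≤ ENNReal.ofReal ((n:ℝ)^(-2:ℝ)) := ENNReal.ofReal_le_ofReal hreal
  have hBC_E : ∀ᵐ ω ∂ℙ, ∀ᶠ n in atTop, ω ∉ E n :=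
    MeasureTheory.ae_eventually_notMem (tsum_meas_ne_top E hEsum)
  have hBC_F : ∀ᵐ ω ∂ℙ, ∀ᶠ n in atTop, ω ∉ F n :=
    MeasureTheory.ae_eventually_notMem (tsum_meas_ne_top F hFsum)
  filter_upwards [hBC_E, hBC_F, hMk] with ω h1 h2 h3
  filter_upwards [h1, h2, h3, eventually_ge_atTop 2] with n hn1 hn2 hn3 hn4
  obtain ⟨⟨z₀, hz₀B, hz₀⟩, hcard⟩ := hn3
  have hlog : 0 < Real.log n := Real.log_pos (by exact_mod_cast hn4)
  have hup : Mk n ω ≤ x n := by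
    by_contra hcon
    push_neg at hcon
    apply hn1
    simp only [hE]
    refine Set.mem_iUnion₂.mpr ⟨(latticeBall d n).filter (fun z => Mk n ω ≤ ξ z ω), ?_, ?_⟩
    · rw [Finset.mem_powersetCard]
      exact ⟨Finset.filter_subset _ _, hcard⟩
    · refine Set.mem_iInter₂.mpr ?_
      intro z hz
      rw [Finset.mem_filter] at hz
      exact lt_of_lt_of_le hcon hz.2
  have hlow : y n ≤ Mk n ω := by
    by_contra hcon
    push_neg at hcon
    apply hn2
    have hz₀f : z₀ ∈ (latticeBall d n).filter (fun z => Mk n ω ≤ ξ z ω) :=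
      Finset.mem_filter.mpr ⟨hz₀B, le_of_eq hz₀.symm⟩
    set S := (latticeBall d n) \ ((latticeBall d n).filter (fun z => Mk n ω ≤ ξ z ω)) with hS
    have hz₀S : z₀ ∉ S := by
      rw [hS, Finset.mem_sdiff]
      exact fun h => h.2 hz₀f
    have hkm1 : k n + 1 ≤ m n := by
      rw [← hcard]
      exact Finset.card_le_card (Finset.filter_subset _ _)
    have hcardT : (insert z₀ S).card = m n - k n := by
      rw [Finset.card_insert_of_notMem hz₀S, hS,
        Finset.card_sdiff_of_subset (Finset.filter_subset _ _), hcard]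
      simp only [hm, hk] at hkm1 ⊢
      omega
    simp only [hF]
    refine Set.mem_iUnion₂.mpr ⟨insert z₀ S, ?_, ?_⟩
    · rw [Finset.mem_powersetCard]
      exact ⟨Finset.insert_subset hz₀B (hS ▸ Finset.sdiff_subset), hcardT⟩
    · refine Set.mem_iInter₂.mpr ?_
      intro z hz
      rcases Finset.mem_insert.mp hz with rfl | hzS
      · show ξ z ω ≤ y n
        rw [hz₀]
        linarith
      · rw [hS, Finset.mem_sdiff, Finset.mem_filter] at hzS
        have : ¬ (Mk n ω ≤ ξ z ω) := fun h => hzS.2 ⟨hzS.1, h⟩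
        show ξ z ω ≤ y n
        push_neg at this
        linarith
  rw [abs_le]
  constructor
  · have : ((d:ℝ) - ρ - ε) ≤ Mk n ω / Real.log n := by
      rw [le_div_iff₀ hlog]
      exact hlow
    linarith
  · have : Mk n ω / Real.log n ≤ ((d:ℝ) - ρ + ε) := by
      rw [div_le_iff₀ hlog]
      exact hup
    linarith

theorem exponential_upper_order_statistics
    {Ω : Type*} [MeasureSpace Ω] [IsProbabilityMeasure (ℙ : Measure Ω)]
    (d : ℕ) (hd : 1 ≤ d) (ρ : ℝ) (hρ : ρ ∈ Set.Ioo (0 : ℝ) d)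
    (ξ : (Fin d → ℤ) → Ω → ℝ) (hmeas : ∀ z, Measurable (ξ z))
    (hindep : iIndepFun ξ ℙ)
    (hdist : ∀ z, ∀ x : ℝ, 0 ≤ x → ℙ {ω | x < ξ z ω} = ENNReal.ofReal (Real.exp (-x)))
    (Mk : ℕ → Ω → ℝ)
    -- `Mk n ω` is the `(⌊n^ρ⌋+1)`st largest value of the field on the ball of radius `n`:
    (hMk : ∀ᵐ ω ∂ℙ, ∀ᶠ n : ℕ in atTop,
      (∃ z ∈ latticeBall d n, ξ z ω = Mk n ω) ∧
      ((latticeBall d n).filter (fun z => Mk n ω ≤ ξ z ω)).card = ⌊(n : ℝ) ^ ρ⌋₊ + 1) :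
    ∀ᵐ ω ∂ℙ, Tendsto (fun n : ℕ => Mk n ω / Real.log n) atTop (nhds ((d : ℝ) - ρ)) := by
  obtain ⟨hρ0, hρd⟩ := hρ
  have hpos : (0:ℝ) < (d:ℝ) - ρ := by linarith
  have hj : ∀ j : ℕ, ∀ᵐ ω ∂ℙ, ∀ᶠ n : ℕ in atTop,
      |Mk n ω / Real.log n - ((d:ℝ) - ρ)| ≤ ((d:ℝ)-ρ)/(j+2) := by
    intro j
    apply core_lemma d hd ρ hρ0 hρd ξ hmeas hindep hdist Mk hMk
    · positivity
    · apply div_lt_self hpos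
      have : (0:ℝ) ≤ (j:ℝ) := Nat.cast_nonneg j
      linarith
  filter_upwards [ae_all_iff.mpr hj] with ω hω
  rw [Metric.tendsto_atTop]
  intro ε hε
  obtain ⟨j, hjgt⟩ := exists_nat_gt (((d:ℝ)-ρ)/ε)
  have hlt : ((d:ℝ)-ρ)/((j:ℝ)+2) < ε := by
    rw [div_lt_iff₀ (by positivity)]
    have h1 : ((d:ℝ)-ρ)/ε < (j:ℝ) + 2 := by linarith
    rw [div_lt_iff₀ hε] at h1
    linarith
  obtain ⟨N, hN⟩ := eventually_atTop.mp (hω j)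
  refine ⟨N, fun n hn => lt_of_le_of_lt ?_ hlt⟩
  rw [Real.dist_eq]
  exact hN n hn
end

section
/- Let $n\ge1$, let $\xi_0,\dots,\xi_n$ be real numbers with a unique maximum attained at index $i^*$ and such that $\xi_{i^*}-\xi_i\ge1$ for all $i\ne i^*$. Then for every $t>0$, $e^{t\xi_n}\int_{\{x\in\mathbb{R}_+^n:\ \sum_{i=0}^{n-1}x_i<t\}}\exp\Big\{\sum_{i=0}^{n-1}x_i(\xi_i-\xi_n)\Big\}dx_0\cdots dx_{n-1}\ \le\ e^{t\xi_{i^*}}\prod_{i\ne i^*}\frac{1}{\xi_{i^*}-\xi_i}$. -/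
open MeasureTheory

section Aux
open Set

section Tmap
variable {n : ℕ}

noncomputable def Tmap (j : Fin n) (t : ℝ) : (Fin n → ℝ) → (Fin n → ℝ) :=
  fun x => Function.update x j (t - ∑ i, x i)

lemma Tmap_apply (j : Fin n) (t : ℝ) (x : Fin n → ℝ) (i : Fin n) :
    Tmap j t x i = if i = j then t - ∑ k, x k else x i := by
  simp [Tmap, Function.update]

lemma Tmap_sum (j : Fin n) (t : ℝ) (x : Fin n → ℝ) :
    ∑ i, Tmap j t x i = t - x j := by
  rw [Tmap, Finset.sum_update_of_mem (Finset.mem_univ j)]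
  have h : ∑ k ∈ Finset.univ \ {j}, x k = (∑ k, x k) - x j := by
    rw [Finset.sdiff_singleton_eq_erase, Finset.sum_erase_eq_sub (Finset.mem_univ j)]
  rw [h]; ring

lemma Tmap_involutive (j : Fin n) (t : ℝ) : Function.Involutive (Tmap j t) := by
  intro x
  funext i
  rw [Tmap_apply, Tmap_sum]
  by_cases hij : i = j
  · subst hij; simp
  · simp [Tmap_apply, hij]

noncomputable def TmapMatrix (j : Fin n) : Matrix (Fin n) (Fin n) ℝ :=
  Matrix.of fun i k => if i = j then (-1 : ℝ) else if i = k then 1 else 0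

lemma TmapMatrix_det (j : Fin n) : (TmapMatrix j).det = -1 := by
  have h : TmapMatrix j = 1 + Matrix.replicateCol (Fin 1) (fun i => if i = j then (-1:ℝ) else 0) *
      Matrix.replicateRow (Fin 1) (fun k => if k = j then (2:ℝ) else 1) := by
    ext i k
    simp only [TmapMatrix, Matrix.of_apply, Matrix.add_apply, Matrix.one_apply,
      Matrix.mul_apply, Matrix.replicateCol_apply, Matrix.replicateRow_apply, Finset.univ_unique,
      Finset.sum_singleton]
    by_cases hij : i = j <;> by_cases hik : i = k <;> by_cases hkj : k = j <;>
      subst_vars <;> simp_all <;> norm_num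
  rw [h]; erw [Matrix.det_one_add_replicateCol_mul_replicateRow (ι := Fin 1)]
  simp [dotProduct, Finset.sum_ite_eq']
  norm_num

lemma TmapMatrix_toLin (j : Fin n) (x : Fin n → ℝ) (i : Fin n) :
    Matrix.toLin' (TmapMatrix j) x i = if i = j then -∑ k, x k else x i := by
  rw [Matrix.toLin'_apply]
  simp only [Matrix.mulVec, dotProduct, TmapMatrix, Matrix.of_apply]
  by_cases hij : i = j
  · simp [hij, Finset.sum_neg_distrib, neg_mul, one_mul]
  · simp [hij, ite_mul, Finset.sum_ite_eq]

lemma Tmap_measurePreserving (j : Fin n) (t : ℝ) :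
    MeasurePreserving (Tmap j t) (volume : Measure (Fin n → ℝ)) volume := by
  have hdet : LinearMap.det (Matrix.toLin' (TmapMatrix j)) = -1 := by
    rw [LinearMap.det_toLin', TmapMatrix_det]
  have hL : MeasurePreserving (Matrix.toLin' (TmapMatrix j))
      (volume : Measure (Fin n → ℝ)) volume := by
    refine ⟨(Matrix.toLin' (TmapMatrix j)).continuous_of_finiteDimensional.measurable, ?_⟩
    rw [Real.map_linearMap_volume_pi_eq_smul_volume_pi (by rw [hdet]; norm_num), hdet]
    norm_num
  have heq : Tmap j t = (fun y => (fun i => if i = j then t else 0) + y) ∘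
      (Matrix.toLin' (TmapMatrix j)) := by
    funext x
    funext i
    simp only [Function.comp_apply, Pi.add_apply, Tmap_apply, TmapMatrix_toLin]
    by_cases hij : i = j <;> simp [hij, sub_eq_add_neg]
  rw [heq]
  exact (measurePreserving_add_left volume _).comp hL

noncomputable def TmapEquiv (j : Fin n) (t : ℝ) : (Fin n → ℝ) ≃ᵐ (Fin n → ℝ) where
  toEquiv := (Tmap_involutive j t).toPerm _
  measurable_toFun := (Tmap_measurePreserving j t).measurable
  measurable_invFun := (Tmap_measurePreserving j t).measurable

lemma Tmap_setIntegral (j : Fin n) (t : ℝ) (g : (Fin n → ℝ) → ℝ) (S : Set (Fin n → ℝ))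
    (hS : ∀ x ∈ S, Tmap j t x ∈ S) :
    ∫ x in S, g x = ∫ x in S, g (Tmap j t x) := by
  have hpre : Tmap j t ⁻¹' S = S := by
    ext x
    constructor
    · intro hx
      have := hS _ hx
      rwa [Tmap_involutive j t x] at this
    · exact fun hx => hS x hx
  rw [← (Tmap_measurePreserving j t).setIntegral_preimage_emb
    (TmapEquiv j t).measurableEmbedding g S, hpre]

end Tmap


lemma aux_exp_int {a : ℝ} (ha : 0 < a) :
    ∫ x in Set.Ioi (0:ℝ), Real.exp (-(a * x)) = a⁻¹ := by
  have h := integral_comp_mul_left_Ioi (fun y => Real.exp (-y)) 0 ha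
  simp only [mul_zero, integral_exp_neg_Ioi_zero, smul_eq_mul, mul_one] at h
  exact h

lemma aux_prod_indicator {n : ℕ} (f : Fin n → ℝ → ℝ) :
    (Set.univ.pi fun _ : Fin n => Set.Ioi (0:ℝ)).indicator
      (fun x : Fin n → ℝ => ∏ i, f i (x i))
    = fun x => ∏ i, (Set.Ioi (0:ℝ)).indicator (f i) (x i) := by
  funext x
  by_cases hx : x ∈ Set.univ.pi fun _ : Fin n => Set.Ioi (0:ℝ)
  · rw [Set.indicator_of_mem hx]
    exact Finset.prod_congr rfl fun i _ =>
      (Set.indicator_of_mem (hx i (Set.mem_univ i)) _).symm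
  · rw [Set.indicator_of_notMem hx]
    rw [Set.mem_pi] at hx
    push_neg at hx
    obtain ⟨i, -, hi⟩ := hx
    exact (Finset.prod_eq_zero (Finset.mem_univ i)
      (Set.indicator_of_notMem hi _)).symm

lemma aux_prod_integrableOn {n : ℕ} (a : Fin n → ℝ) (ha : ∀ i, 0 < a i) :
    IntegrableOn (fun x : Fin n → ℝ => ∏ i, Real.exp (-(a i * x i)))
      (Set.univ.pi fun _ => Set.Ioi (0:ℝ)) := by
  rw [← integrable_indicator_iff (MeasurableSet.univ_pi fun _ => measurableSet_Ioi),
    aux_prod_indicator (fun i y => Real.exp (-(a i * y)))]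
  exact Integrable.fintype_prod (f := fun i => (Set.Ioi (0:ℝ)).indicator
    (fun y => Real.exp (-(a i * y)))) fun i => by
    rw [integrable_indicator_iff measurableSet_Ioi]
    simpa [neg_mul] using exp_neg_integrableOn_Ioi 0 (ha i)

lemma aux_prod_integral {n : ℕ} (a : Fin n → ℝ) (ha : ∀ i, 0 < a i) :
    ∫ x in Set.univ.pi fun _ : Fin n => Set.Ioi (0:ℝ),
      ∏ i, Real.exp (-(a i * x i)) = ∏ i, (a i)⁻¹ := by
  rw [← integral_indicator (MeasurableSet.univ_pi fun _ => measurableSet_Ioi), aux_prod_indicator (fun i y => Real.exp (-(a i * y))),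
    MeasureTheory.integral_fintype_prod_volume_eq_prod]
  exact Finset.prod_congr rfl fun i _ => by
    rw [integral_indicator measurableSet_Ioi, aux_exp_int (ha i)]

end Aux

theorem feynman_kac_path_integral_bound
    (n : ℕ) (hn : 1 ≤ n) (ξ : Fin (n + 1) → ℝ) (istar : Fin (n + 1))
    (hgap : ∀ i, i ≠ istar → 1 ≤ ξ istar - ξ i)
    (hmax : ∀ i, i ≠ istar → ξ i < ξ istar)
    (t : ℝ) (ht : 0 < t) :
    Real.exp (t * ξ (Fin.last n)) *
        ∫ x in {x : Fin n → ℝ | (∀ i, 0 < x i) ∧ ∑ i, x i < t},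
          Real.exp (∑ i, x i * (ξ i.castSucc - ξ (Fin.last n)))
      ≤ Real.exp (t * ξ istar) *
        ∏ i ∈ Finset.univ.erase istar, (ξ istar - ξ i)⁻¹ := by
  classical
  set S : Set (Fin n → ℝ) := {x | (∀ i, 0 < x i) ∧ ∑ i, x i < t} with hS
  set σ : Equiv.Perm (Fin (n+1)) := Equiv.swap istar (Fin.last n) with hσ
  set φ : Fin n → Fin (n+1) := fun i => σ i.castSucc with hφ
  have hφne : ∀ i, φ i ≠ istar := by
    intro i h
    have h2 : σ (Fin.last n) = istar := Equiv.swap_apply_right istar (Fin.last n)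
    have h3 : (i.castSucc : Fin (n+1)) = Fin.last n := σ.injective (h.trans h2.symm)
    exact (Fin.castSucc_lt_last i).ne h3
  set a : Fin n → ℝ := fun i => ξ istar - ξ (φ i) with ha
  have hapos : ∀ i, 0 < a i := fun i => by
    have := hgap _ (hφne i); simp only [ha]; linarith
  set B : (Fin n → ℝ) → ℝ := fun x => ∑ i, x i * (ξ (φ i) - ξ istar) with hB
  set A : (Fin n → ℝ) → ℝ := fun x =>
    ∑ i, x i * (ξ i.castSucc - ξ istar)
      + (t - ∑ i, x i) * (ξ (Fin.last n) - ξ istar) with hA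
  have key : ∀ x : Fin n → ℝ,
      t * ξ (Fin.last n) + ∑ i, x i * (ξ i.castSucc - ξ (Fin.last n))
        = t * ξ istar + A x := by
    intro x
    simp only [hA, mul_sub, Finset.sum_sub_distrib, ← Finset.sum_mul]
    ring
  -- product reindexing
  have hprod : ∏ i, (a i)⁻¹ = ∏ k ∈ Finset.univ.erase istar, (ξ istar - ξ k)⁻¹ := by
    refine Finset.prod_nbij φ (fun i _ => Finset.mem_erase.2 ⟨hφne i, Finset.mem_univ _⟩)
      (fun i _ k _ h => Fin.castSucc_injective n (σ.injective h)) ?_ (fun i _ => rfl)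
    intro k hk
    have hk' : k ≠ istar := (Finset.mem_erase.mp (Finset.mem_coe.mp hk)).1
    have hσk : σ k ≠ Fin.last n := by
      intro h
      exact hk' (σ.injective (h.trans (Equiv.swap_apply_left istar (Fin.last n)).symm))
    rcases Fin.eq_castSucc_or_eq_last (σ k) with ⟨i, hi⟩ | hl
    · refine ⟨i, by simp, ?_⟩
      show σ i.castSucc = k
      rw [← hi, hσ, Equiv.swap_apply_self]
    · exact absurd hl hσk
  -- step 1 : rewrite both sides
  have l1 : Real.exp (t * ξ (Fin.last n)) *
      ∫ x in S, Real.exp (∑ i, x i * (ξ i.castSucc - ξ (Fin.last n)))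
      = Real.exp (t * ξ istar) * ∫ x in S, Real.exp (A x) := by
    rw [← integral_const_mul, ← integral_const_mul]
    exact integral_congr_ae (Filter.Eventually.of_forall fun x => by
      dsimp only; rw [← Real.exp_add, ← Real.exp_add, key x])
  -- step 2 : symmetrization
  have l2 : ∫ x in S, Real.exp (A x) = ∫ x in S, Real.exp (B x) := by
    rcases Fin.eq_castSucc_or_eq_last istar with ⟨j, hj⟩ | hlast
    · -- istar = j.castSucc : use the swap substitution
      have hTS : ∀ x ∈ S, Tmap j t x ∈ S := by
        intro x hx
        obtain ⟨hpos, hsum⟩ := hx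
        constructor
        · intro i
          rw [Tmap_apply]
          by_cases hij : i = j
          · subst hij; rw [if_pos rfl]; linarith
          · rw [if_neg hij]; exact hpos i
        · rw [Tmap_sum]
          have := hpos j; linarith
      have hAB : ∀ x : Fin n → ℝ, A (Tmap j t x) = B x := by
        intro x
        have hφj : φ j = Fin.last n := by
          show σ j.castSucc = Fin.last n
          rw [← hj, hσ, Equiv.swap_apply_left]
        have hupd : (fun i => Tmap j t x i * (ξ i.castSucc - ξ istar))
            = Function.update (fun i => x i * (ξ i.castSucc - ξ istar)) j
                ((t - ∑ k, x k) * (ξ j.castSucc - ξ istar)) := by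
          funext i
          by_cases hij : i = j
          · subst hij; simp [Tmap_apply]
          · simp [Tmap_apply, Function.update, hij]
        have hsum1 : ∑ i, Tmap j t x i * (ξ i.castSucc - ξ istar)
            = ∑ i ∈ Finset.univ.erase j, x i * (ξ i.castSucc - ξ istar) := by
          rw [hupd, Finset.sum_update_of_mem (Finset.mem_univ j), ← hj,
            Finset.sdiff_singleton_eq_erase]
          simp
        have hφi : ∀ i ∈ Finset.univ.erase j, ξ (φ i) = ξ i.castSucc := by
          intro i hi
          have hij : i ≠ j := (Finset.mem_erase.mp hi).1
          have h1 : (i.castSucc : Fin (n+1)) ≠ istar := by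
            rw [hj]; exact fun h => hij (Fin.castSucc_injective n h)
          have h2 : (i.castSucc : Fin (n+1)) ≠ Fin.last n := (Fin.castSucc_lt_last i).ne
          show ξ (σ i.castSucc) = ξ i.castSucc
          rw [hσ, Equiv.swap_apply_of_ne_of_ne h1 h2]
        have hBsplit : B x = x j * (ξ (Fin.last n) - ξ istar)
            + ∑ i ∈ Finset.univ.erase j, x i * (ξ i.castSucc - ξ istar) := by
          rw [hB]
          dsimp only
          rw [← Finset.add_sum_erase Finset.univ _ (Finset.mem_univ j), hφj,
            Finset.sum_congr rfl fun i hi => by rw [hφi i hi]]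
        rw [hA]
        dsimp only
        rw [hsum1, Tmap_sum, hBsplit]
        ring
      rw [Tmap_setIntegral j t (fun x => Real.exp (A x)) S hTS]
      exact integral_congr_ae (Filter.Eventually.of_forall fun x => by
        dsimp only; rw [hAB x])
    · -- istar = last
      have hφi : ∀ i : Fin n, φ i = i.castSucc := by
        intro i
        show σ i.castSucc = i.castSucc
        rw [hσ, hlast, Equiv.swap_self, Equiv.refl_apply]
      have : ∀ x : Fin n → ℝ, A x = B x := by
        intro x
        simp only [hA, hB, hlast, sub_self, mul_zero, add_zero]
        exact Finset.sum_congr rfl fun i _ => by rw [hφi i]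
      exact integral_congr_ae (Filter.Eventually.of_forall fun x => by
        dsimp only; rw [this x])
  -- step 3 : bound by the product integral
  have l3 : ∀ x : Fin n → ℝ, Real.exp (B x) = ∏ i, Real.exp (-(a i * x i)) := by
    intro x
    simp only [hB]
    rw [Real.exp_sum]
    exact Finset.prod_congr rfl fun i _ => by simp only [ha]; ring_nf
  have l4 : ∫ x in S, Real.exp (B x) ≤ ∏ i, (a i)⁻¹ := by
    calc ∫ x in S, Real.exp (B x) = ∫ x in S, ∏ i, Real.exp (-(a i * x i)) :=
          integral_congr_ae (Filter.Eventually.of_forall fun x => by dsimp only; rw [l3 x])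
      _ ≤ ∫ x in Set.univ.pi fun _ : Fin n => Set.Ioi (0:ℝ), ∏ i, Real.exp (-(a i * x i)) := by
          refine setIntegral_mono_set (aux_prod_integrableOn a hapos)
            (Filter.Eventually.of_forall fun x => ?_) (HasSubset.Subset.eventuallyLE ?_)
          · positivity
          · exact fun x hx i _ => hx.1 i
      _ = ∏ i, (a i)⁻¹ := aux_prod_integral a hapos
  rw [l1, ← hprod]
  exact mul_le_mul_of_nonneg_left (l2 ▸ l4) (Real.exp_nonneg _)
end
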